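/- arXiv:1711.06739 — 2 statements merged into one kernel-verified Lean document; each statement's English description precedes it below -/
import Mathlib

section
/- Define an equivalence relation ∼ on G×G generated by (g,1) ∼ (1,1) ∼ (1,g), (g,g⁻¹) ∼ (g⁻¹,g), and (g,h) ∼ (h, h⁻¹g⁻¹) ∼ (h⁻¹, g⁻¹) for g ≠ 1 ≠ h ≠ g⁻¹. Then the group of pre-cocycles pZ²(G,A) is isomorphic to the group A^Ω of all functions from the quotient Ω = (G×G)/∼ to A. -/
variable (G : Type*) [Group G] (A : Type*) [AddCommGroup A]

/-- The coboundary `δ²σ(x,y,z) = σ(y,z) − σ(xy,z) + σ(x,yz) − σ(x,y)`. -/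
def d2 (σ : G → G → A) (x y z : G) : A :=
  σ y z - σ (x * y) z + σ x (y * z) - σ x y

variable {G A}

/-- A pre-cocycle: `δ²σ(x,y,z) = 0` whenever `1 ∈ {x,y,z,xy,yz,xyz}`. -/
def IsPreCocycle (σ : G → G → A) : Prop :=
  ∀ x y z : G, (1 : G) ∈ ({x, y, z, x * y, y * z, x * y * z} : Set G) →
    d2 G A σ x y z = 0

variable (G A)

/-- The group `pZ²(G,A)` of pre-cocycles under pointwise addition. -/
def preZ2 : AddSubgroup (G → G → A) where
  carrier := {σ | IsPreCocycle σ}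
  zero_mem' := by intro x y z _; simp [d2]
  add_mem' := by
    intro σ τ hσ hτ x y z h
    have h1 := hσ x y z h
    have h2 := hτ x y z h
    simp only [d2, Pi.add_apply] at *
    linear_combination (norm := abel1) h1 + h2
  neg_mem' := by
    intro σ hσ x y z h
    have h1 := hσ x y z h
    simp only [d2, Pi.neg_apply] at *
    linear_combination (norm := abel1) -h1

/-- The generating relation `∼` on `G × G`. -/
inductive pairRel : G × G → G × G → Prop
  | left (g : G) : pairRel (g, 1) (1, 1)
  | right (g : G) : pairRel (1, g) (1, 1)
  | inv (g : G) : pairRel (g, g⁻¹) (g⁻¹, g)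
  | cyc (g h : G) : g ≠ 1 → h ≠ 1 → h ≠ g⁻¹ →
      pairRel (g, h) (h, h⁻¹ * g⁻¹)
  | swap (g h : G) : g ≠ 1 → h ≠ 1 → h ≠ g⁻¹ →
      pairRel (g, h) (h⁻¹, g⁻¹)

namespace Pz2Aux

variable {G A}

/-! ### Combinatorics of the relation -/

/-- cyclic rotation -/
def cy (p : G × G) : G × G := (p.2, p.2⁻¹ * p.1⁻¹)
/-- swap -/
def sw (p : G × G) : G × G := (p.2⁻¹, p.1⁻¹)

def Deg (p : G × G) : Prop := p.1 = 1 ∨ p.2 = 1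
def Invc (p : G × G) : Prop := p.1 ≠ 1 ∧ p.2 = p.1⁻¹
def Gen (p : G × G) : Prop := p.1 ≠ 1 ∧ p.2 ≠ 1 ∧ p.2 ≠ p.1⁻¹

/-- same triangle -/
def InT (p q : G × G) : Prop := q = p ∨ q = cy p ∨ q = cy (cy p)

@[simp] lemma cy_cy_cy (p : G × G) : cy (cy (cy p)) = p := by
  obtain ⟨x, y⟩ := p; simp [cy, mul_assoc]

@[simp] lemma sw_sw (p : G × G) : sw (sw p) = p := by
  obtain ⟨x, y⟩ := p; simp [sw]

lemma sw_cy_cy (p : G × G) : sw (cy (cy p)) = cy (sw p) := by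
  obtain ⟨x, y⟩ := p; simp [sw, cy, mul_assoc]

lemma sw_cy (p : G × G) : sw (cy p) = cy (cy (sw p)) := by
  obtain ⟨x, y⟩ := p; simp [sw, cy, mul_assoc]

lemma InT.refl (p : G × G) : InT p p := Or.inl rfl

lemma InT.symm {p q : G × G} (h : InT p q) : InT q p := by
  rcases h with h | h | h <;> subst h
  · exact Or.inl rfl
  · exact Or.inr (Or.inr (by rw [cy_cy_cy]))
  · exact Or.inr (Or.inl (by rw [cy_cy_cy]))

lemma InT.trans {p q r : G × G} (h1 : InT p q) (h2 : InT q r) : InT p r := by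
  rcases h1 with h1 | h1 | h1 <;> subst h1 <;>
    rcases h2 with h2 | h2 | h2 <;> subst h2 <;>
      simp [InT, cy_cy_cy]

lemma InT.sw {p q : G × G} (h : InT p q) : InT (sw p) (sw q) := by
  rcases h with h | h | h <;> subst h
  · exact Or.inl rfl
  · exact Or.inr (Or.inr (sw_cy p))
  · exact Or.inr (Or.inl (sw_cy_cy p))

lemma Gen.not_inT_sw {p : G × G} (hp : Gen p) : ¬ InT p (sw p) := by
  obtain ⟨x, y⟩ := p
  obtain ⟨hx, hy, hxy⟩ := hp
  simp only [ne_eq] at hx hy hxy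
  rintro (h | h | h) <;> rw [Prod.ext_iff] at h <;>
    simp only [sw, cy] at h <;> obtain ⟨h1, h2⟩ := h
  · exact hxy (by rw [← h1, inv_inv])
  · apply hy
    have h3 : y⁻¹ * x⁻¹ = 1 * x⁻¹ := by rw [one_mul, ← h2]
    have h4 := mul_right_cancel h3
    simpa using h4
  · apply hx
    have h3 : y⁻¹ * 1 = y⁻¹ * x⁻¹ := by rw [mul_one]; exact h1
    have h4 := mul_left_cancel h3
    rw [← inv_inv x, ← h4, inv_one]

lemma Gen.cy {p : G × G} (hp : Gen p) : Gen (Pz2Aux.cy p) := by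
  obtain ⟨x, y⟩ := p
  obtain ⟨hx, hy, hxy⟩ := hp
  simp only [ne_eq] at hx hy hxy
  refine ⟨hy, fun h => ?_, fun h => ?_⟩ <;> simp only [Pz2Aux.cy] at h
  · have h5 : y⁻¹ = x := by simpa using mul_eq_one_iff_eq_inv.1 h
    exact hxy (by rw [← h5, inv_inv])
  · apply hx
    have h3 : y⁻¹ * x⁻¹ = y⁻¹ * 1 := by rw [mul_one]; exact h
    have h4 := mul_left_cancel h3
    simpa using h4

lemma Gen.sw {p : G × G} (hp : Gen p) : Gen (Pz2Aux.sw p) := by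
  obtain ⟨x, y⟩ := p
  obtain ⟨hx, hy, hxy⟩ := hp
  simp only [ne_eq] at hx hy hxy
  refine ⟨inv_ne_one.2 hy, inv_ne_one.2 hx, fun h => ?_⟩
  simp [Pz2Aux.sw] at h
  exact hxy h.symm

lemma Deg.not_gen {p : G × G} (hd : Deg p) : ¬ Gen p := by
  rcases hd with h | h
  · exact fun hg => hg.1 h
  · exact fun hg => hg.2.1 h

lemma Invc.not_gen {p : G × G} (hi : Invc p) : ¬ Gen p := fun hg => hg.2.2 hi.2

lemma cat_cases (p : G × G) : Deg p ∨ Invc p ∨ Gen p := by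
  by_cases h1 : p.1 = 1
  · exact Or.inl (Or.inl h1)
  by_cases h2 : p.2 = 1
  · exact Or.inl (Or.inr h2)
  by_cases h3 : p.2 = p.1⁻¹
  · exact Or.inr (Or.inl ⟨h1, h3⟩)
  · exact Or.inr (Or.inr ⟨h1, h2, h3⟩)

lemma deg_left (g : G) : Deg (g, (1:G)) := Or.inr rfl
lemma deg_right (g : G) : Deg ((1:G), g) := Or.inl rfl

lemma not_invc_left (g : G) : ¬ Invc (g, (1:G)) := by
  rintro ⟨h1, h2⟩
  exact h1 (by rw [← inv_inv g, ← h2, inv_one])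

lemma not_invc_right (g : G) : ¬ Invc ((1:G), g) := fun h => h.1 rfl

/-- The category-and-triangle lemma, by induction on the equivalence closure. -/
lemma L0 {p q : G × G} (h : Relation.EqvGen (pairRel G) p q) :
    (Deg p ↔ Deg q) ∧ (Invc p ↔ Invc q) ∧ (Gen p ↔ Gen q) ∧
      (Gen p → (InT p q ∨ InT p (sw q))) := by
  induction h with
  | rel a b hab =>
    cases hab with
    | left g =>
      refine ⟨⟨fun _ => Or.inl rfl, fun _ => deg_left g⟩,
        ⟨fun h => absurd h (not_invc_left g), fun h => absurd h (not_invc_right 1)⟩,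
        ⟨fun h => absurd h (deg_left g).not_gen, fun h => absurd h (deg_right 1).not_gen⟩,
        fun h => absurd h (deg_left g).not_gen⟩
    | right g =>
      refine ⟨⟨fun _ => Or.inl rfl, fun _ => deg_right g⟩,
        ⟨fun h => absurd h (not_invc_right g), fun h => absurd h (not_invc_right 1)⟩,
        ⟨fun h => absurd h (deg_right g).not_gen, fun h => absurd h (deg_right 1).not_gen⟩,
        fun h => absurd h (deg_right g).not_gen⟩
    | inv g =>
      constructor
      · simp [Deg, inv_eq_one, or_comm]
      refine ⟨?_, ?_, ?_⟩
      · simp [Invc, inv_eq_one, inv_inv, and_comm]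
      · constructor
        · rintro ⟨-, -, h3⟩; exact absurd rfl h3
        · rintro ⟨-, -, h3⟩; exact absurd (inv_inv g).symm h3
      · rintro ⟨-, -, h3⟩; exact absurd rfl h3
    | cyc g h hg hh hgh =>
      have hp : Gen (g, h) := ⟨hg, hh, hgh⟩
      have hq : Gen (h, h⁻¹ * g⁻¹) := hp.cy
      have dp : ¬ Deg (g, h) := by rintro (hd | hd); exacts [hp.1 hd, hp.2.1 hd]
      have dq : ¬ Deg (h, h⁻¹ * g⁻¹) := by rintro (hd | hd); exacts [hq.1 hd, hq.2.1 hd]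
      exact ⟨iff_of_false dp dq,
        iff_of_false (fun hi => hi.not_gen hp) (fun hi => hi.not_gen hq),
        iff_of_true hp hq,
        fun _ => Or.inl (Or.inr (Or.inl rfl))⟩
    | swap g h hg hh hgh =>
      have hp : Gen (g, h) := ⟨hg, hh, hgh⟩
      have hq : Gen (h⁻¹, g⁻¹) := hp.sw
      have dp : ¬ Deg (g, h) := by rintro (hd | hd); exacts [hp.1 hd, hp.2.1 hd]
      have dq : ¬ Deg (h⁻¹, g⁻¹) := by rintro (hd | hd); exacts [hq.1 hd, hq.2.1 hd]
      refine ⟨iff_of_false dp dq,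
        iff_of_false (fun hi => hi.not_gen hp) (fun hi => hi.not_gen hq),
        iff_of_true hp hq, fun _ => Or.inr ?_⟩
      have : Pz2Aux.sw (h⁻¹, g⁻¹) = Pz2Aux.sw (Pz2Aux.sw (g, h)) := rfl
      rw [this, sw_sw]
      exact InT.refl _
  | refl a => exact ⟨Iff.rfl, Iff.rfl, Iff.rfl, fun _ => Or.inl (InT.refl a)⟩
  | symm a b hab ih =>
    obtain ⟨d, i, g, f⟩ := ih
    refine ⟨d.symm, i.symm, g.symm, fun hb => ?_⟩
    rcases f (g.2 hb) with hin | hin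
    · exact Or.inl hin.symm
    · have := hin.sw
      rw [sw_sw] at this
      exact Or.inr this.symm
  | trans a b c hab hbc ih1 ih2 =>
    obtain ⟨d1, i1, g1, f1⟩ := ih1
    obtain ⟨d2, i2, g2, f2⟩ := ih2
    refine ⟨d1.trans d2, i1.trans i2, g1.trans g2, fun ha => ?_⟩
    rcases f1 ha with h1 | h1 <;> rcases f2 (g1.1 ha) with h2 | h2
    · exact Or.inl (h1.trans h2)
    · exact Or.inr (h1.trans h2)
    · exact Or.inr (h1.trans h2.sw)
    · have := h2.sw
      rw [sw_sw] at this
      exact Or.inl (h1.trans this)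

/-! ### Consequences of the pre-cocycle property -/

section Cocycle

variable {σ : G → G → A}

lemma id_left (hσ : IsPreCocycle σ) (y : G) : σ 1 y = σ 1 1 := by
  have h := hσ 1 y y⁻¹ (by simp)
  simp only [d2, one_mul, mul_inv_cancel] at h
  linear_combination (norm := abel1) -h

lemma id_right (hσ : IsPreCocycle σ) (y : G) : σ y 1 = σ 1 1 := by
  have h := hσ y 1 1 (by simp)
  simp only [d2, mul_one, one_mul] at h
  linear_combination (norm := abel1) -h

lemma id_inv (hσ : IsPreCocycle σ) (g : G) : σ g g⁻¹ = σ g⁻¹ g := by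
  have h := hσ g g⁻¹ g (by simp)
  simp only [d2, mul_inv_cancel, inv_mul_cancel] at h
  have h1 := id_left hσ g
  have h2 := id_right hσ g
  linear_combination (norm := abel1) -h - h1 + h2

lemma id_tsymm (hσ : IsPreCocycle σ) (g : G) : σ g⁻¹ g⁻¹⁻¹ = σ g g⁻¹ := by
  rw [inv_inv]
  exact (id_inv hσ g).symm

lemma idC4 (hσ : IsPreCocycle σ) (y z : G) :
    σ y z + σ y⁻¹ (y * z) = σ 1 1 + σ y y⁻¹ := by
  have h := hσ y⁻¹ y z (by simp)
  simp only [d2, inv_mul_cancel] at h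
  have h1 := id_left hσ z
  have h2 := id_inv hσ y
  linear_combination (norm := abel1) h + h1 - h2

lemma idC5 (hσ : IsPreCocycle σ) (x y : G) :
    σ x y + σ (x * y) y⁻¹ = σ 1 1 + σ y y⁻¹ := by
  have h := hσ x y y⁻¹ (by simp)
  simp only [d2, mul_inv_cancel] at h
  have h1 := id_right hσ x
  linear_combination (norm := abel1) -h + h1

lemma idC6 (hσ : IsPreCocycle σ) (x y : G) :
    σ x y + σ (x * y) (x * y)⁻¹ = σ y (x * y)⁻¹ + σ x x⁻¹ := by
  have h := hσ x y (x * y)⁻¹ (by simp [mul_assoc, inv_mul_cancel_left])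
  have e : y * (x * y)⁻¹ = x⁻¹ := by
    rw [mul_inv_rev, mul_inv_cancel_left]
  rw [d2, e] at h
  linear_combination (norm := abel1) -h

/-! values `nn` and `MM` -/

def nn (σ : G → G → A) (p : G × G) : A :=
  σ p.1 p.2 + σ (p.1 * p.2) (p.1 * p.2)⁻¹

def MM (σ : G → G → A) (p : G × G) : A :=
  σ 1 1 + σ p.1 p.1⁻¹ + σ p.2 p.2⁻¹ + σ (p.1 * p.2) (p.1 * p.2)⁻¹

lemma nn_cy (hσ : IsPreCocycle σ) (p : G × G) : nn σ (cy p) = nn σ p := by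
  obtain ⟨x, y⟩ := p
  simp only [nn, cy]
  have e1 : y * (y⁻¹ * x⁻¹) = x⁻¹ := by rw [mul_inv_cancel_left]
  have e2 : y⁻¹ * x⁻¹ = (x * y)⁻¹ := (mul_inv_rev x y).symm
  rw [e1, e2]
  have h := idC6 hσ x y
  have h2 := id_tsymm hσ x
  linear_combination (norm := abel1) -h + h2

lemma nn_sw (hσ : IsPreCocycle σ) (p : G × G) : nn σ (sw p) + nn σ p = MM σ p := by
  obtain ⟨x, y⟩ := p
  simp only [nn, sw, MM]
  have e2 : y⁻¹ * x⁻¹ = (x * y)⁻¹ := (mul_inv_rev x y).symm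
  rw [e2]
  have h6 := idC6 hσ x y
  have h4 := idC4 hσ y (x * y)⁻¹
  have e1 : y * (x * y)⁻¹ = x⁻¹ := by rw [mul_inv_rev, mul_inv_cancel_left]
  rw [e1] at h4
  have h2 := id_tsymm hσ (x * y)
  linear_combination (norm := abel1) h6 + h4 + h2

lemma MM_cy (hσ : IsPreCocycle σ) (p : G × G) : MM σ (cy p) = MM σ p := by
  obtain ⟨x, y⟩ := p
  simp only [MM, cy]
  have e1 : y * (y⁻¹ * x⁻¹) = x⁻¹ := by rw [mul_inv_cancel_left]
  have e2 : y⁻¹ * x⁻¹ = (x * y)⁻¹ := (mul_inv_rev x y).symm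
  rw [e1, e2]
  have h1 := id_tsymm hσ (x * y)
  have h2 := id_tsymm hσ x
  linear_combination (norm := abel1) h1 + h2

lemma MM_sw (hσ : IsPreCocycle σ) (p : G × G) : MM σ (sw p) = MM σ p := by
  obtain ⟨x, y⟩ := p
  simp only [MM, sw]
  have e2 : y⁻¹ * x⁻¹ = (x * y)⁻¹ := (mul_inv_rev x y).symm
  rw [e2]
  have h1 := id_tsymm hσ (x * y)
  have h2 := id_tsymm hσ x
  have h3 := id_tsymm hσ y
  linear_combination (norm := abel1) h1 + h2 + h3

lemma MM_inT (hσ : IsPreCocycle σ) {p q : G × G} (h : InT p q) : MM σ q = MM σ p := by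
  rcases h with h | h | h <;> subst h
  · rfl
  · exact MM_cy hσ p
  · rw [MM_cy hσ (cy p), MM_cy hσ p]

lemma deg_val (hσ : IsPreCocycle σ) {p : G × G} (hd : Deg p) : σ p.1 p.2 = σ 1 1 := by
  rcases hd with h | h <;> rw [h]
  · exact id_left hσ p.2
  · exact id_right hσ p.1

/-- The value lemma along the equivalence closure. -/
lemma L (hσ : IsPreCocycle σ) {p q : G × G} (h : Relation.EqvGen (pairRel G) p q) :
    (Invc p → σ p.1 p.2 = σ q.1 q.2) ∧
      (Gen p → MM σ p = MM σ q ∧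
        ((InT p q ∧ nn σ p = nn σ q) ∨ (InT p (sw q) ∧ nn σ p + nn σ q = MM σ p))) := by
  induction h with
  | rel a b hab =>
    cases hab with
    | left g =>
      refine ⟨fun hi => absurd hi (not_invc_left g), fun hg => absurd hg (deg_left g).not_gen⟩
    | right g =>
      refine ⟨fun hi => absurd hi (not_invc_right g), fun hg => absurd hg (deg_right g).not_gen⟩
    | inv g =>
      refine ⟨fun _ => id_inv hσ g, fun hg => absurd rfl hg.2.2⟩
    | cyc g h hg hh hgh =>
      have hp : Gen (g, h) := ⟨hg, hh, hgh⟩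
      refine ⟨fun hi => absurd hp hi.not_gen, fun _ => ?_⟩
      have e : (h, h⁻¹ * g⁻¹) = Pz2Aux.cy (g, h) := rfl
      rw [e]
      exact ⟨(MM_cy hσ _).symm, Or.inl ⟨Or.inr (Or.inl rfl), (nn_cy hσ _).symm⟩⟩
    | swap g h hg hh hgh =>
      have hp : Gen (g, h) := ⟨hg, hh, hgh⟩
      refine ⟨fun hi => absurd hp hi.not_gen, fun _ => ?_⟩
      have e : (h⁻¹, g⁻¹) = Pz2Aux.sw (g, h) := rfl
      rw [e]
      refine ⟨(MM_sw hσ _).symm, Or.inr ⟨?_, ?_⟩⟩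
      · rw [sw_sw]; exact InT.refl _
      · linear_combination (norm := abel1) nn_sw hσ (g, h)
  | refl a =>
    exact ⟨fun _ => rfl, fun _ => ⟨rfl, Or.inl ⟨InT.refl a, rfl⟩⟩⟩
  | symm a b hab ih =>
    obtain ⟨i, f⟩ := ih
    have l0 := L0 hab
    refine ⟨fun hb => (i (l0.2.1.2 hb)).symm, fun hb => ?_⟩
    have ha : Gen a := l0.2.2.1.2 hb
    obtain ⟨hM, hbr⟩ := f ha
    refine ⟨hM.symm, ?_⟩
    rcases hbr with ⟨hin, he⟩ | ⟨hin, he⟩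
    · exact Or.inl ⟨hin.symm, he.symm⟩
    · have hin2 := hin.sw
      rw [sw_sw] at hin2
      refine Or.inr ⟨hin2.symm, ?_⟩
      linear_combination (norm := abel1) he + hM
  | trans a b c hab hbc ih1 ih2 =>
    obtain ⟨i1, f1⟩ := ih1
    obtain ⟨i2, f2⟩ := ih2
    have l0 := L0 hab
    refine ⟨fun ha => (i1 ha).trans (i2 (l0.2.1.1 ha)), fun ha => ?_⟩
    have hb : Gen b := l0.2.2.1.1 ha
    obtain ⟨M1, B1⟩ := f1 ha
    obtain ⟨M2, B2⟩ := f2 hb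
    refine ⟨M1.trans M2, ?_⟩
    rcases B1 with ⟨n1, e1⟩ | ⟨n1, e1⟩ <;> rcases B2 with ⟨n2, e2⟩ | ⟨n2, e2⟩
    · exact Or.inl ⟨n1.trans n2, e1.trans e2⟩
    · refine Or.inr ⟨n1.trans n2, ?_⟩
      linear_combination (norm := abel1) e1 + e2 - M1
    · refine Or.inr ⟨n1.trans n2.sw, ?_⟩
      linear_combination (norm := abel1) e1 - e2
    · have hin2 := n2.sw
      rw [sw_sw] at hin2
      refine Or.inl ⟨n1.trans hin2, ?_⟩
      linear_combination (norm := abel1) e1 - e2 + M1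

end Cocycle

/-! ### The maps -/

section Maps

open scoped Classical

noncomputable def rep (ω : Quot (pairRel G)) : G × G := ω.exists_rep.choose

lemma rep_spec (ω : Quot (pairRel G)) : Quot.mk (pairRel G) (rep ω) = ω :=
  ω.exists_rep.choose_spec

lemma cls_deg {p : G × G} (hd : Deg p) :
    Quot.mk (pairRel G) p = Quot.mk (pairRel G) ((1:G), (1:G)) := by
  obtain ⟨x, y⟩ := p
  rcases hd with h | h
  · have : x = 1 := h
    subst this
    exact Quot.sound (pairRel.right y)
  · have : y = 1 := h
    subst this
    exact Quot.sound (pairRel.left x)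

lemma cls_inv (g : G) :
    Quot.mk (pairRel G) (g, g⁻¹) = Quot.mk (pairRel G) (g⁻¹, g) :=
  Quot.sound (pairRel.inv g)

lemma cls_cy {p : G × G} (hp : Gen p) :
    Quot.mk (pairRel G) p = Quot.mk (pairRel G) (cy p) := by
  obtain ⟨x, y⟩ := p
  exact Quot.sound (pairRel.cyc x y hp.1 hp.2.1 hp.2.2)

lemma cls_sw {p : G × G} (hp : Gen p) :
    Quot.mk (pairRel G) p = Quot.mk (pairRel G) (sw p) := by
  obtain ⟨x, y⟩ := p
  exact Quot.sound (pairRel.swap x y hp.1 hp.2.1 hp.2.2)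

lemma cls_inT {p q : G × G} (hp : Gen p) (h : InT p q) :
    Quot.mk (pairRel G) p = Quot.mk (pairRel G) q := by
  rcases h with h | h | h <;> subst h
  · rfl
  · exact cls_cy hp
  · exact (cls_cy hp).trans (cls_cy hp.cy)

variable (f : Quot (pairRel G) → A)

def cf : A := f (Quot.mk (pairRel G) ((1:G), (1:G)))

def tf (g : G) : A := f (Quot.mk (pairRel G) (g, g⁻¹))

def Mf (p : G × G) : A := cf f + tf f p.1 + tf f p.2 + tf f (p.1 * p.2)

lemma tf_one : tf f (1 : G) = cf f := by
  show f (Quot.mk (pairRel G) (1, (1:G)⁻¹)) = _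
  rw [inv_one]; rfl

lemma tf_inv (g : G) : tf f g⁻¹ = tf f g := by
  show f (Quot.mk (pairRel G) (g⁻¹, g⁻¹⁻¹)) = f (Quot.mk (pairRel G) (g, g⁻¹))
  rw [inv_inv, ← cls_inv]

lemma Mf_cy (p : G × G) : Mf f (cy p) = Mf f p := by
  obtain ⟨x, y⟩ := p
  show cf f + tf f y + tf f (y⁻¹ * x⁻¹) + tf f (y * (y⁻¹ * x⁻¹)) = _
  rw [mul_inv_cancel_left, ← mul_inv_rev, tf_inv, tf_inv]
  show _ = cf f + tf f x + tf f y + tf f (x * y)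
  abel

lemma Mf_sw (p : G × G) : Mf f (sw p) = Mf f p := by
  obtain ⟨x, y⟩ := p
  show cf f + tf f y⁻¹ + tf f x⁻¹ + tf f (y⁻¹ * x⁻¹) = _
  rw [← mul_inv_rev, tf_inv, tf_inv, tf_inv]
  show _ = cf f + tf f x + tf f y + tf f (x * y)
  abel

lemma Mf_inT {p q : G × G} (h : InT p q) : Mf f q = Mf f p := by
  rcases h with h | h | h <;> subst h
  · rfl
  · exact Mf_cy f p
  · rw [Mf_cy f (cy p), Mf_cy f p]

/-- The inverse map: a function on the quotient gives a pre-cocycle. -/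
noncomputable def Psi : G → G → A := fun g h =>
  if g = 1 ∨ h = 1 then cf f
  else if h = g⁻¹ then tf f g
  else (if InT (g, h) (rep (Quot.mk (pairRel G) (g, h))) then f (Quot.mk (pairRel G) (g, h))
        else Mf f (g, h) - f (Quot.mk (pairRel G) (g, h))) - tf f (g * h)

noncomputable def NPsi (p : G × G) : A := Psi f p.1 p.2 + tf f (p.1 * p.2)

lemma psi_one_left (h : G) : Psi f 1 h = cf f := by
  rw [Psi]; exact if_pos (Or.inl rfl)

lemma psi_one_right (g : G) : Psi f g 1 = cf f := by
  rw [Psi]; exact if_pos (Or.inr rfl)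

lemma psi_invp (g : G) : Psi f g g⁻¹ = tf f g := by
  by_cases hg : g = 1
  · subst hg
    rw [inv_one, psi_one_left, tf_one]
  · rw [Psi, if_neg, if_pos rfl]
    rintro (h | h)
    · exact hg h
    · exact hg (by rw [← inv_inv g, h, inv_one])

lemma psi_inv_left (g : G) : Psi f g⁻¹ g = tf f g := by
  have := psi_invp f g⁻¹
  rw [inv_inv] at this
  rw [this, tf_inv]

lemma npsi_gen {p : G × G} (hp : Gen p) :
    NPsi f p = if InT p (rep (Quot.mk (pairRel G) p)) then f (Quot.mk (pairRel G) p)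
      else Mf f p - f (Quot.mk (pairRel G) p) := by
  obtain ⟨g, h⟩ := p
  have h1 : ¬(g = 1 ∨ h = 1) := by rintro (e | e); exacts [hp.1 e, hp.2.1 e]
  show Psi f g h + tf f (g * h) = _
  rw [Psi]
  simp only [if_neg h1, if_neg hp.2.2, sub_add_cancel]

lemma rep_gen {p : G × G} (hp : Gen p) :
    Gen (rep (Quot.mk (pairRel G) p)) ∧
      (InT p (rep (Quot.mk (pairRel G) p)) ∨ InT p (sw (rep (Quot.mk (pairRel G) p)))) := by
  have E : Relation.EqvGen (pairRel G) p (rep (Quot.mk (pairRel G) p)) :=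
    Quot.eqvGen_exact (rep_spec (Quot.mk (pairRel G) p)).symm
  have l0 := L0 E
  exact ⟨l0.2.2.1.1 hp, l0.2.2.2 hp⟩

lemma npsi_same {p q : G × G} (hp : Gen p) (hq : Gen q)
    (hcls : Quot.mk (pairRel G) p = Quot.mk (pairRel G) q) (hin : InT p q) :
    NPsi f q = NPsi f p := by
  obtain ⟨hr, hdisj⟩ := rep_gen hp
  rw [npsi_gen f hq, npsi_gen f hp, ← hcls, Mf_inT f hin]
  by_cases hb : InT p (rep (Quot.mk (pairRel G) p))
  · rw [if_pos hb, if_pos (hin.symm.trans hb)]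
  · rw [if_neg hb, if_neg (fun h => hb (hin.trans h))]

lemma npsi_opp {p q : G × G} (hp : Gen p) (hq : Gen q)
    (hcls : Quot.mk (pairRel G) p = Quot.mk (pairRel G) q) (hin : InT (sw p) q) :
    NPsi f p + NPsi f q = Mf f p := by
  obtain ⟨hr, hdisj⟩ := rep_gen hp
  have hMq : Mf f q = Mf f p := (Mf_inT f hin).trans (Mf_sw f p)
  rw [npsi_gen f hq, npsi_gen f hp, ← hcls, hMq]
  by_cases hb : InT p (rep (Quot.mk (pairRel G) p))
  · have hq2 : ¬ InT q (rep (Quot.mk (pairRel G) p)) := by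
      intro h
      exact hp.not_inT_sw (hb.trans (hin.trans h).symm)
    rw [if_pos hb, if_neg hq2]
    abel
  · have hbsw : InT p (sw (rep (Quot.mk (pairRel G) p))) := hdisj.resolve_left hb
    have h2 : InT q (rep (Quot.mk (pairRel G) p)) := by
      have h3 := hbsw.sw
      rw [sw_sw] at h3
      exact hin.symm.trans h3
    rw [if_neg hb, if_pos h2]
    abel

lemma psiC4 (y z : G) : Psi f y z + Psi f y⁻¹ (y * z) = cf f + tf f y := by
  rcases cat_cases (y, z) with hd | hi | hg
  · rcases hd with h | h
    · have hy : y = 1 := h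
      subst hy
      rw [inv_one, one_mul, psi_one_left, tf_one]
    · have hz : z = 1 := h
      subst hz
      rw [mul_one, psi_one_right, psi_inv_left]
  · have hz : z = y⁻¹ := hi.2
    subst hz
    rw [psi_invp, mul_inv_cancel, psi_one_right]
    abel
  · have e : Pz2Aux.cy (Pz2Aux.sw (y, z)) = (y⁻¹, y * z) := by
      simp [Pz2Aux.cy, Pz2Aux.sw]
    have hq : Gen (y⁻¹, y * z) := e ▸ hg.sw.cy
    have hcls : Quot.mk (pairRel G) (y, z) = Quot.mk (pairRel G) (y⁻¹, y * z) := by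
      rw [← e]
      exact (cls_sw hg).trans (cls_cy hg.sw)
    have hin : InT (sw (y, z)) (y⁻¹, y * z) := by
      rw [← e]
      exact Or.inr (Or.inl rfl)
    have h := npsi_opp f hg hq hcls hin
    simp only [NPsi, Mf] at h
    simp only [inv_mul_cancel_left] at h
    linear_combination (norm := abel1) h

lemma psiC5 (x y : G) : Psi f x y + Psi f (x * y) y⁻¹ = cf f + tf f y := by
  rcases cat_cases (x, y) with hd | hi | hg
  · rcases hd with h | h
    · have hx : x = 1 := h
      subst hx
      rw [one_mul, psi_one_left, psi_invp]
    · have hy : y = 1 := h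
      subst hy
      rw [mul_one, inv_one, psi_one_right, tf_one]
  · have hy : y = x⁻¹ := hi.2
    subst hy
    rw [psi_invp, mul_inv_cancel, inv_inv, psi_one_left, tf_inv]
    abel
  · have e : Pz2Aux.cy (Pz2Aux.cy (Pz2Aux.sw (x, y))) = (x * y, y⁻¹) := by
      simp [Pz2Aux.cy, Pz2Aux.sw, mul_assoc]
    have hq : Gen (x * y, y⁻¹) := e ▸ hg.sw.cy.cy
    have hcls : Quot.mk (pairRel G) (x, y) = Quot.mk (pairRel G) (x * y, y⁻¹) := by
      rw [← e]
      exact (cls_sw hg).trans ((cls_cy hg.sw).trans (cls_cy hg.sw.cy))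
    have hin : InT (sw (x, y)) (x * y, y⁻¹) := by
      rw [← e]
      exact Or.inr (Or.inr rfl)
    have h := npsi_opp f hg hq hcls hin
    simp only [NPsi, Mf] at h
    simp only [mul_inv_cancel_right] at h
    linear_combination (norm := abel1) h

lemma psiC6 (x y : G) : Psi f x y + tf f (x * y) = Psi f y (y⁻¹ * x⁻¹) + tf f x := by
  rcases cat_cases (x, y) with hd | hi | hg
  · rcases hd with h | h
    · have hx : x = 1 := h
      subst hx
      rw [inv_one, mul_one, one_mul, psi_one_left, psi_invp, tf_one]
      abel
    · have hy : y = 1 := h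
      subst hy
      rw [mul_one, inv_one, one_mul, psi_one_right, psi_one_left]
  · have hy : y = x⁻¹ := hi.2
    subst hy
    rw [psi_invp, mul_inv_cancel, inv_inv, mul_inv_cancel, tf_one, psi_one_right]
    abel
  · have h := npsi_same f hg hg.cy (cls_cy hg) (Or.inr (Or.inl rfl))
    simp only [NPsi] at h
    simp only [Pz2Aux.cy, mul_inv_cancel_left] at h
    rw [tf_inv] at h
    linear_combination (norm := abel1) -h

lemma psi_mem : IsPreCocycle (Psi f) := by
  intro x y z hmem
  simp only [Set.mem_insert_iff, Set.mem_singleton_iff] at hmem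
  rcases hmem with h | h | h | h | h | h
  · subst h
    rw [d2, one_mul, psi_one_left, psi_one_left]
    abel
  · subst h
    rw [d2, mul_one, one_mul, psi_one_left, psi_one_right]
    abel
  · subst h
    rw [d2, mul_one, psi_one_right, psi_one_right]
    abel
  · have hx : x = y⁻¹ := eq_inv_of_mul_eq_one_left h.symm
    subst hx
    rw [d2, inv_mul_cancel, psi_one_left]
    have h4 := psiC4 f y z
    have h5 := psi_inv_left f y
    linear_combination (norm := abel1) h4 - h5
  · have hz : z = y⁻¹ := eq_inv_of_mul_eq_one_right h.symm
    subst hz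
    rw [d2, mul_inv_cancel, psi_one_right]
    have h5 := psiC5 f x y
    have h6 := psi_invp f y
    linear_combination (norm := abel1) -h5 + h6
  · have hz : z = (x * y)⁻¹ := eq_inv_of_mul_eq_one_right h.symm
    subst hz
    rw [d2]
    have e : y * (x * y)⁻¹ = x⁻¹ := by rw [mul_inv_rev, mul_inv_cancel_left]
    rw [e, psi_invp, psi_invp]
    have h6 := psiC6 f x y
    rw [show y⁻¹ * x⁻¹ = (x * y)⁻¹ from (mul_inv_rev x y).symm] at h6
    linear_combination (norm := abel1) -h6

end Maps

/-! ### The forward map and the equivalence -/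

section Phi

open scoped Classical

/-- The forward map. -/
noncomputable def Phi (σ : G → G → A) : Quot (pairRel G) → A := fun ω =>
  if Gen (rep ω) then nn σ (rep ω) else σ (rep ω).1 (rep ω).2

variable {σ : G → G → A}

lemma phi_inv_class (hσ : IsPreCocycle σ) (g : G) :
    Phi σ (Quot.mk (pairRel G) (g, g⁻¹)) = σ g g⁻¹ := by
  have E : Relation.EqvGen (pairRel G) (rep (Quot.mk (pairRel G) (g, g⁻¹))) (g, g⁻¹) :=
    Quot.eqvGen_exact (rep_spec (Quot.mk (pairRel G) (g, g⁻¹)))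
  have l0 := L0 E
  by_cases hg : g = 1
  · subst hg
    have hd : Deg ((1:G), (1:G)⁻¹) := Or.inl rfl
    have hdr : Deg (rep (Quot.mk (pairRel G) ((1:G), (1:G)⁻¹))) := l0.1.2 hd
    rw [Phi, if_neg hdr.not_gen, deg_val hσ hdr, inv_one, id_left hσ]
  · have hi : Invc (g, g⁻¹) := ⟨hg, rfl⟩
    have hir : Invc (rep (Quot.mk (pairRel G) (g, g⁻¹))) := l0.2.1.2 hi
    rw [Phi, if_neg hir.not_gen]
    exact (L hσ E).1 hir

lemma phi_one (hσ : IsPreCocycle σ) :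
    Phi σ (Quot.mk (pairRel G) ((1:G), (1:G))) = σ 1 1 := by
  have := phi_inv_class hσ (1 : G)
  rwa [inv_one] at this

lemma tf_phi (hσ : IsPreCocycle σ) (g : G) : tf (Phi σ) g = σ g g⁻¹ :=
  phi_inv_class hσ g

lemma cf_phi (hσ : IsPreCocycle σ) : cf (Phi σ) = σ 1 1 :=
  phi_one hσ

lemma Mf_phi (hσ : IsPreCocycle σ) (p : G × G) : Mf (Phi σ) p = MM σ p := by
  rw [Mf, MM, tf_phi hσ, tf_phi hσ, tf_phi hσ, cf_phi hσ]

lemma psi_phi (hσ : IsPreCocycle σ) (g h : G) : Psi (Phi σ) g h = σ g h := by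
  rcases cat_cases (g, h) with hd | hi | hg
  · have e1 : Psi (Phi σ) g h = cf (Phi σ) := by
      rw [Psi]
      exact if_pos (by rcases hd with e | e; exacts [Or.inl e, Or.inr e])
    rw [e1, cf_phi hσ, (deg_val hσ hd : σ g h = σ 1 1)]
  · have hh : h = g⁻¹ := hi.2
    subst hh
    rw [psi_invp, tf_phi hσ]
  · have E : Relation.EqvGen (pairRel G) (g, h) (rep (Quot.mk (pairRel G) (g, h))) :=
      Quot.eqvGen_exact (rep_spec (Quot.mk (pairRel G) (g, h))).symm
    obtain ⟨hr, hdisj⟩ := rep_gen hg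
    have hL := (L hσ E).2 hg
    have hphi : Phi σ (Quot.mk (pairRel G) (g, h)) = nn σ (rep (Quot.mk (pairRel G) (g, h))) := by
      rw [Phi, if_pos hr]
    have key : NPsi (Phi σ) (g, h) = nn σ (g, h) := by
      rw [npsi_gen _ hg, Mf_phi hσ, hphi]
      by_cases hb : InT (g, h) (rep (Quot.mk (pairRel G) (g, h)))
      · rw [if_pos hb]
        rcases hL.2 with ⟨_, he⟩ | ⟨hin, _⟩
        · exact he.symm
        · exact absurd (hb.symm.trans hin) hr.not_inT_sw
      · rw [if_neg hb]
        rcases hL.2 with ⟨hin, _⟩ | ⟨_, he⟩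
        · exact absurd hin hb
        · linear_combination (norm := abel1) -he
    have expand : NPsi (Phi σ) (g, h) = Psi (Phi σ) g h + σ (g * h) (g * h)⁻¹ := by
      rw [NPsi, tf_phi hσ]
    rw [expand] at key
    have : nn σ (g, h) = σ g h + σ (g * h) (g * h)⁻¹ := rfl
    rw [this] at key
    linear_combination (norm := abel1) key

lemma phi_psi (f : Quot (pairRel G) → A) (ω : Quot (pairRel G)) : Phi (Psi f) ω = f ω := by
  have hrs : Quot.mk (pairRel G) (rep ω) = ω := rep_spec ω
  rcases cat_cases (rep ω) with hd | hi | hg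
  · rw [Phi, if_neg hd.not_gen]
    have e1 : Psi f (rep ω).1 (rep ω).2 = cf f := by
      rw [Psi]
      exact if_pos (by rcases hd with e | e; exacts [Or.inl e, Or.inr e])
    rw [e1, cf, ← cls_deg hd, hrs]
  · rw [Phi, if_neg hi.not_gen]
    have e2 : (rep ω) = ((rep ω).1, (rep ω).1⁻¹) := by
      rw [← hi.2]
    have e1 : Psi f (rep ω).1 (rep ω).2 = tf f (rep ω).1 := by
      rw [hi.2, psi_invp]
    rw [e1, tf, ← e2, hrs]
  · rw [Phi, if_pos hg]
    have key : nn (Psi f) (rep ω) = NPsi f (rep ω) := by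
      rw [nn, NPsi]
      congr 1
      have e3 : ((rep ω).1 * (rep ω).2, ((rep ω).1 * (rep ω).2)⁻¹) =
          ((rep ω).1 * (rep ω).2, ((rep ω).1 * (rep ω).2)⁻¹) := rfl
      exact psi_invp f ((rep ω).1 * (rep ω).2)
    rw [key, npsi_gen f hg, hrs, if_pos (InT.refl _)]

end Phi

end Pz2Aux

open Pz2Aux in
/-- `pZ²(G,A)` is isomorphic to the group of all functions `Ω → A`, where
`Ω = (G × G)/∼`. -/
theorem preZ2_equiv_functions :
    Nonempty (preZ2 G A ≃+ (Quot (pairRel G) → A)) := by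
  refine ⟨{
    toFun := fun σ => Phi σ.1
    invFun := fun f => ⟨Psi f, psi_mem f⟩
    left_inv := ?_
    right_inv := ?_
    map_add' := ?_ }⟩
  · intro σ
    exact Subtype.ext (funext fun g => funext fun h => psi_phi σ.2 g h)
  · intro f
    exact funext fun ω => phi_psi f ω
  · intro σ τ
    funext ω
    show Phi (σ.1 + τ.1) ω = Phi σ.1 ω + Phi τ.1 ω
    rw [Phi, Phi, Phi]
    by_cases hb : Gen (rep ω)
    · rw [if_pos hb, if_pos hb, if_pos hb, nn, nn, nn]
      simp only [Pi.add_apply]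
      abel
    · rw [if_neg hb, if_neg hb, if_neg hb]
      simp only [Pi.add_apply]
end

section
/- If G is a finite group of order n, with G_{(2)} and G_{(3)} the sets of elements of order 2 and 3 respectively, then the number of equivalence classes of the relation ∼ on G×G equals m = (n² + 2|G_{(3)}| + 3|G_{(2)}| + 5)/6. -/
variable (G : Type*) [Group G] (A : Type*) [AddCommGroup A]

variable {G A}

variable (G A)

open Finset

section
open Classical
variable {G : Type*} [Group G] [Fintype G]

noncomputable def trivCls (G : Type*) [Group G] [Fintype G] : Finset (G × G) :=
  (univ.image fun g => ((g : G), (1 : G))) ∪ (univ.image fun g => ((1 : G), g))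

noncomputable def cls : G × G → Finset (G × G)
  | (a, b) =>
    if a = 1 ∨ b = 1 then trivCls G
    else if b = a⁻¹ then {(a, b), (b, a)}
    else if b = a ∧ a * a * a = 1 then {(a, a), (a⁻¹, a⁻¹)}
    else {(a, b), (b, (a * b)⁻¹), ((a * b)⁻¹, a),
          (b⁻¹, a⁻¹), (a * b, b⁻¹), (a⁻¹, a * b)}

lemma mem_trivCls_iff {p : G × G} : p ∈ trivCls G ↔ p.1 = 1 ∨ p.2 = 1 := by
  obtain ⟨a, b⟩ := p
  simp only [trivCls, mem_union, mem_image, mem_univ, true_and, Prod.mk.injEq]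
  constructor
  · rintro (⟨g, rfl, rfl⟩ | ⟨g, rfl, rfl⟩) <;> simp
  · rintro (rfl | rfl)
    · exact Or.inr ⟨b, rfl, rfl⟩
    · exact Or.inl ⟨a, rfl, rfl⟩

lemma cls_triv {a b : G} (h : a = 1 ∨ b = 1) : cls (a, b) = trivCls G := by
  simp only [cls, if_pos h]

lemma cls_invpair {a b : G} (ha : a ≠ 1) (hb : b = a⁻¹) :
    cls (a, b) = {(a, b), (b, a)} := by
  have hb1 : b ≠ 1 := by rw [hb]; exact inv_ne_one.2 ha
  simp only [cls, if_neg (by tauto : ¬(a = 1 ∨ b = 1)), if_pos hb]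

lemma cls_diag3 {a b : G} (ha : a ≠ 1) (hb : b = a) (h3 : a * a * a = 1) :
    cls (a, b) = {(a, a), (a⁻¹, a⁻¹)} := by
  have hba : b ≠ a⁻¹ := by
    rw [hb]; intro e
    have : a * a * a = a⁻¹ * a * a := by rw [← e]
    rw [h3] at this
    simp at this
    exact ha this.symm
  simp only [cls, if_neg (by rw [hb]; tauto : ¬(a = 1 ∨ b = 1)), if_neg hba,
    if_pos (⟨hb, h3⟩ : b = a ∧ a * a * a = 1)]

lemma cls_generic {a b : G} (ha : a ≠ 1) (hb : b ≠ 1) (hba : b ≠ a⁻¹)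
    (hd : ¬(b = a ∧ a * a * a = 1)) :
    cls (a, b) = {(a, b), (b, (a * b)⁻¹), ((a * b)⁻¹, a),
          (b⁻¹, a⁻¹), (a * b, b⁻¹), (a⁻¹, a * b)} := by
  simp only [cls, if_neg (by tauto : ¬(a = 1 ∨ b = 1)), if_neg hba, if_neg hd]

lemma mem_cls_self (p : G × G) : p ∈ cls p := by
  classical
  obtain ⟨a, b⟩ := p
  by_cases h1 : a = 1 ∨ b = 1
  · rw [cls_triv h1]; exact mem_trivCls_iff.2 h1
  push_neg at h1
  by_cases h2 : b = a⁻¹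
  · rw [cls_invpair h1.1 h2]; simp
  by_cases h3 : b = a ∧ a * a * a = 1
  · rw [cls_diag3 h1.1 h3.1 h3.2, h3.1]; simp
  · rw [cls_generic h1.1 h1.2 h2 h3]; simp


omit [Fintype G] in
lemma inv_cube {a : G} (h3 : a * a * a = 1) : a⁻¹ * a⁻¹ * a⁻¹ = 1 := by
  have h := congrArg Inv.inv h3
  simp only [mul_inv_rev, inv_one, mul_assoc] at h ⊢
  exact h

omit [Fintype G] in
lemma sq_eq_inv_of_cube {a : G} (h3 : a * a * a = 1) : a * a = a⁻¹ :=
  eq_inv_iff_mul_eq_one.mpr h3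

omit [Fintype G] in
lemma inv_sq_of_cube {a : G} (h3 : a * a * a = 1) : a⁻¹ * a⁻¹ = a := by
  rw [← sq_eq_inv_of_cube h3, ← mul_assoc, h3, one_mul]

omit [Fintype G] in
lemma ne_inv_of_diag3 {a : G} (ha : a ≠ 1) (h3 : a * a * a = 1) : a ≠ a⁻¹ := by
  intro e
  apply ha
  have : a * a * a = a⁻¹ * a * a := by rw [← e]
  rw [h3] at this
  simp at this
  exact this.symm

set_option maxHeartbeats 1000000 in
lemma cls_eq_of_rel {p q : G × G} (h : pairRel G p q) : cls p = cls q := by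
  induction h with
  | left g => rw [cls_triv (Or.inr rfl), cls_triv (Or.inl rfl)]
  | right g => rw [cls_triv (Or.inl rfl), cls_triv (Or.inl rfl)]
  | inv g =>
      by_cases hg : g = 1
      · subst hg
        rw [cls_triv (Or.inl rfl), cls_triv (Or.inr rfl)]
      · rw [cls_invpair hg rfl, cls_invpair (inv_ne_one.2 hg) (inv_inv g).symm]
        exact Finset.pair_comm _ _
  | cyc g h hg hh hgh =>
      by_cases hd : h = g ∧ g * g * g = 1
      · obtain ⟨rfl, h3⟩ := hd
        rw [inv_sq_of_cube h3]
      · have hgh1 : g * h ≠ 1 :=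
          fun e => hgh (eq_inv_of_mul_eq_one_right e)
        have hx1 : h⁻¹ * g⁻¹ ≠ 1 := by
          rw [← mul_inv_rev]; exact inv_ne_one.2 hgh1
        have hx2 : h⁻¹ * g⁻¹ ≠ h⁻¹ := by
          intro e
          exact inv_ne_one.2 hg (mul_eq_left.mp e)
        have hx3 : ¬(h⁻¹ * g⁻¹ = h ∧ h * h * h = 1) := by
          rintro ⟨e1, e2⟩
          apply hd
          have eg : g⁻¹ = h * h := by
            have := congrArg (h * ·) e1
            simpa only [mul_inv_cancel_left] using this
          rw [sq_eq_inv_of_cube e2] at eg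
          have hg2 : h = g := inv_injective eg.symm
          exact ⟨hg2, by rw [← hg2]; exact e2⟩
        rw [cls_generic hg hh hgh hd, cls_generic hh hx1 hx2 hx3]
        ext x
        simp only [mem_insert, mem_singleton, mul_inv_rev, inv_inv,
          mul_inv_cancel_left]
        tauto
  | swap g h hg hh hgh =>
      by_cases hd : h = g ∧ g * g * g = 1
      · obtain ⟨rfl, h3⟩ := hd
        rw [cls_diag3 hg rfl h3,
          cls_diag3 (inv_ne_one.2 hg) rfl (inv_cube h3), inv_inv]
        exact Finset.pair_comm _ _
      · have hx1 : g⁻¹ ≠ 1 := inv_ne_one.2 hg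
        have hx0 : h⁻¹ ≠ 1 := inv_ne_one.2 hh
        have hx2 : g⁻¹ ≠ h⁻¹⁻¹ := by
          rw [inv_inv]
          intro e
          exact hgh e.symm
        have hx3 : ¬(g⁻¹ = h⁻¹ ∧ h⁻¹ * h⁻¹ * h⁻¹ = 1) := by
          rintro ⟨e1, e2⟩
          apply hd
          have hg2 : h = g := (inv_injective e1).symm
          refine ⟨hg2, ?_⟩
          have := inv_cube e2
          simpa only [inv_inv, ← hg2] using this
        rw [cls_generic hg hh hgh hd, cls_generic hx0 hx1 hx2 hx3]
        ext x
        simp only [mem_insert, mem_singleton, mul_inv_rev, inv_inv,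
          mul_inv_cancel_left]
        tauto

lemma mk_triv {r : G × G} (h : r.1 = 1 ∨ r.2 = 1) :
    Quot.mk (pairRel G) r = Quot.mk (pairRel G) (1, 1) := by
  obtain ⟨x, y⟩ := r
  rcases h with h | h
  · cases h; exact Quot.sound (pairRel.right y)
  · cases h; exact Quot.sound (pairRel.left x)

lemma mk_eq_of_mem_cls {p q : G × G} (h : q ∈ cls p) :
    Quot.mk (pairRel G) q = Quot.mk (pairRel G) p := by
  obtain ⟨a, b⟩ := p
  by_cases h1 : a = 1 ∨ b = 1
  · rw [cls_triv h1] at h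
    rw [mk_triv (mem_trivCls_iff.mp h)]
    exact (mk_triv h1).symm
  push_neg at h1
  obtain ⟨ha, hb⟩ := h1
  by_cases h2 : b = a⁻¹
  · rw [cls_invpair ha h2] at h
    simp only [mem_insert, mem_singleton] at h
    rcases h with rfl | rfl
    · rfl
    · subst h2
      exact (Quot.sound (pairRel.inv a)).symm
  by_cases h3 : b = a ∧ a * a * a = 1
  · obtain ⟨rfl, h33⟩ := h3
    rw [cls_diag3 ha rfl h33] at h
    simp only [mem_insert, mem_singleton] at h
    rcases h with rfl | rfl
    · rfl
    · exact (Quot.sound (pairRel.swap b b ha ha (ne_inv_of_diag3 ha h33))).symm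
  · rw [cls_generic ha hb h2 h3] at h
    have hab1 : a * b ≠ 1 :=
      fun e => h2 (eq_inv_of_mul_eq_one_right e)
    have hx1 : b⁻¹ * a⁻¹ ≠ 1 := by
      rw [← mul_inv_rev]; exact inv_ne_one.2 hab1
    have hx2 : b⁻¹ * a⁻¹ ≠ b⁻¹ := by
      intro e
      exact inv_ne_one.2 ha (mul_eq_left.mp e)
    have hax : a ≠ (b⁻¹ * a⁻¹)⁻¹ := by
      rw [mul_inv_rev, inv_inv, inv_inv]
      intro e
      exact hb (mul_eq_left.mp e.symm)
    have key : ((b⁻¹ * a⁻¹)⁻¹ : G) = a * b := by group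
    have s1 : Quot.mk (pairRel G) (a, b) = Quot.mk (pairRel G) (b, b⁻¹ * a⁻¹) :=
      Quot.sound (pairRel.cyc a b ha hb h2)
    have s2 : Quot.mk (pairRel G) (b, b⁻¹ * a⁻¹)
        = Quot.mk (pairRel G) (b⁻¹ * a⁻¹, (b⁻¹ * a⁻¹)⁻¹ * b⁻¹) :=
      Quot.sound (pairRel.cyc b (b⁻¹ * a⁻¹) hb hx1 hx2)
    have key2 : ((b⁻¹ * a⁻¹)⁻¹ * b⁻¹ : G) = a := by group
    rw [key2] at s2
    have w1 : Quot.mk (pairRel G) (a, b) = Quot.mk (pairRel G) (b⁻¹, a⁻¹) :=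
      Quot.sound (pairRel.swap a b ha hb h2)
    have w2 : Quot.mk (pairRel G) (b, b⁻¹ * a⁻¹)
        = Quot.mk (pairRel G) ((b⁻¹ * a⁻¹)⁻¹, b⁻¹) :=
      Quot.sound (pairRel.swap b (b⁻¹ * a⁻¹) hb hx1 hx2)
    rw [key] at w2
    have w3 : Quot.mk (pairRel G) (b⁻¹ * a⁻¹, a)
        = Quot.mk (pairRel G) (a⁻¹, (b⁻¹ * a⁻¹)⁻¹) :=
      Quot.sound (pairRel.swap (b⁻¹ * a⁻¹) a hx1 ha hax)
    rw [key] at w3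
    have habi : ((a * b)⁻¹ : G) = b⁻¹ * a⁻¹ := by rw [mul_inv_rev]
    simp only [mem_insert, mem_singleton, habi] at h
    rcases h with rfl | rfl | rfl | rfl | rfl | rfl
    · rfl
    · exact s1.symm
    · exact (s1.trans s2).symm
    · exact w1.symm
    · exact (s1.trans w2).symm
    · exact (s1.trans (s2.trans w3)).symm


lemma cls_eq_iff_mk_eq {p q : G × G} :
    cls p = cls q ↔ Quot.mk (pairRel G) p = Quot.mk (pairRel G) q :=
  ⟨fun h => mk_eq_of_mem_cls (h ▸ mem_cls_self p),
   fun h => congrArg (Quot.lift cls fun _ _ hr => cls_eq_of_rel hr) h⟩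

lemma mem_cls_iff {p q : G × G} : p ∈ cls q ↔ cls p = cls q :=
  ⟨fun h => cls_eq_iff_mk_eq.mpr (mk_eq_of_mem_cls h), fun h => h ▸ mem_cls_self p⟩

lemma card_quot_eq : Nat.card (Quot (pairRel G)) = (univ.image (cls (G := G))).card := by
  set f : Quot (pairRel G) → Finset (G × G) :=
    Quot.lift cls fun _ _ hr => cls_eq_of_rel hr with hf
  have hinj : Function.Injective f := by
    intro x y
    induction x using Quot.ind with | _ p =>
    induction y using Quot.ind with | _ q =>
    intro h
    exact cls_eq_iff_mk_eq.mp h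
  have h1 : Nat.card ↑(Set.range f) = Nat.card (Quot (pairRel G)) :=
    Nat.card_range_of_injective hinj
  have h2 : Set.range f = ↑(univ.image (cls (G := G))) := by
    ext S
    simp only [Set.mem_range, coe_image, Set.mem_image, mem_coe, mem_univ, coe_univ,
      Set.image_univ]
    constructor
    · rintro ⟨x, rfl⟩
      induction x using Quot.ind with | _ p =>
      exact ⟨p, rfl⟩
    · rintro ⟨p, rfl⟩
      exact ⟨Quot.mk _ p, rfl⟩
  rw [← h1, h2, Nat.card_coe_set_eq, Set.ncard_coe_finset]

noncomputable def wt : G × G → ℕ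
  | (a, b) =>
    if a = 1 ∧ b = 1 then 6
    else if a = 1 ∨ b = 1 then 0
    else if b = a⁻¹ then (if a = a⁻¹ then 6 else 3)
    else if b = a ∧ a * a * a = 1 then 3
    else 1

omit [Fintype G] in
lemma wt_generic {a b : G} (ha : a ≠ 1) (hb : b ≠ 1) (hba : b ≠ a⁻¹)
    (hd : ¬(b = a ∧ a * a * a = 1)) : wt (a, b) = 1 := by
  simp only [wt]
  rw [if_neg (by tauto), if_neg (by tauto), if_neg hba, if_neg hd]

omit [Fintype G] in
lemma cube_of_sq_eq_inv {a : G} (e : a * a = a⁻¹) : a * a * a = 1 := by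
  rw [e, inv_mul_cancel]


omit [Fintype G] in
lemma inv_eq_of_eq_inv {x y : G} (e : x = y⁻¹) : y = x⁻¹ :=
  (inv_eq_iff_eq_inv.mpr e).symm

omit [Fintype G] in
lemma cube_of_inv_cube {a : G} (h : a⁻¹ * a⁻¹ * a⁻¹ = 1) : a * a * a = 1 := by
  simpa only [inv_inv] using inv_cube h

lemma sum_wt_cls (q : G × G) : ∑ p ∈ cls q, wt p = 6 := by
  obtain ⟨a, b⟩ := q
  by_cases h1 : a = 1 ∨ b = 1
  · rw [cls_triv h1]
    rw [Finset.sum_eq_single_of_mem ((1 : G), (1 : G))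
      (mem_trivCls_iff.mpr (Or.inl rfl))]
    · simp [wt]
    · rintro ⟨x, y⟩ hp hne
      rcases mem_trivCls_iff.mp hp with h | h <;>
      · simp only at h
        subst h
        simp only [wt, Prod.mk.injEq] at hne ⊢
        rw [if_neg (fun hc => hne (by simp [hc.1, hc.2])), if_pos (by tauto)]
  push_neg at h1
  obtain ⟨ha, hb⟩ := h1
  by_cases h2 : b = a⁻¹
  · subst h2
    rw [cls_invpair ha rfl]
    by_cases hs : a = a⁻¹
    · rw [← hs, Finset.pair_eq_singleton, sum_singleton]
      simp [wt, ha, ← hs]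
    · have hs' : a⁻¹ ≠ a := fun e => hs e.symm
      rw [Finset.sum_pair (by rw [Ne, Prod.mk.injEq]; rintro ⟨e, -⟩; exact hs e)]
      have w1 : wt (a, a⁻¹) = 3 := by simp [wt, ha, hs]
      have w2 : wt (a⁻¹, a) = 3 := by simp [wt, ha, hs']
      rw [w1, w2]
  by_cases h3 : b = a ∧ a * a * a = 1
  · obtain ⟨rfl, h33⟩ := h3
    rw [cls_diag3 ha rfl h33]
    have hs : b ≠ b⁻¹ := ne_inv_of_diag3 ha h33
    have hs' : b⁻¹ ≠ b := fun e => hs e.symm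
    rw [Finset.sum_pair (by rw [Ne, Prod.mk.injEq]; rintro ⟨e, -⟩; exact hs e)]
    have w1 : wt (b, b) = 3 := by simp [wt, ha, hs, h33]
    have w2 : wt (b⁻¹, b⁻¹) = 3 := by simp [wt, ha, hs', inv_cube h33]
    rw [w1, w2]
  · rw [cls_generic ha hb h2 h3]
    have hab1 : a * b ≠ 1 := fun e => h2 (eq_inv_of_mul_eq_one_right e)
    have habn : (a * b)⁻¹ ≠ 1 := inv_ne_one.2 hab1
    have han : a⁻¹ ≠ 1 := inv_ne_one.2 ha
    have hbn : b⁻¹ ≠ 1 := inv_ne_one.2 hb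
    -- weight evaluations
    have wA : wt (a, b) = 1 := wt_generic ha hb h2 h3
    have wB : wt (b, (a * b)⁻¹) = 1 := by
      refine wt_generic hb habn ?_ ?_
      · intro e
        exact ha (mul_eq_right.mp (inv_injective e))
      · rintro ⟨e1, e2⟩
        have f1 : a * b = b⁻¹ := inv_eq_of_eq_inv e1.symm
        have ea : a = b⁻¹ * b⁻¹ := by
          have := congrArg (· * b⁻¹) f1
          simpa only [mul_inv_cancel_right] using this
        rw [inv_sq_of_cube e2] at ea
        exact h3 ⟨ea.symm, by rw [ea]; exact e2⟩
    have wC : wt ((a * b)⁻¹, a) = 1 := by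
      refine wt_generic habn ha ?_ ?_
      · rw [inv_inv]
        intro e
        exact hb (mul_eq_left.mp e.symm)
      · rintro ⟨e1, e2⟩
        have f2 : a * b = a⁻¹ := inv_eq_of_eq_inv e1
        have a3 : a * a * a = 1 := by
          apply cube_of_inv_cube
          rw [← f2]; exact cube_of_inv_cube (by simpa only [f2, inv_inv] using e2)
        have eb : b = a⁻¹ * a⁻¹ := by
          have := congrArg (a⁻¹ * ·) f2
          simpa only [inv_mul_cancel_left] using this
        rw [inv_sq_of_cube a3] at eb
        exact h3 ⟨eb, a3⟩
    have wD : wt (b⁻¹, a⁻¹) = 1 := by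
      refine wt_generic hbn han ?_ ?_
      · rw [inv_inv]
        intro e
        exact h2 e.symm
      · rintro ⟨e1, e2⟩
        have eq1 : a = b := inv_injective e1
        exact h3 ⟨eq1.symm, by rw [eq1]; exact cube_of_inv_cube e2⟩
    have wE : wt (a * b, b⁻¹) = 1 := by
      refine wt_generic hab1 hbn ?_ ?_
      · intro e
        exact ha (mul_eq_right.mp (inv_injective e).symm)
      · rintro ⟨e1, e2⟩
        have f1 : a * b = b⁻¹ := e1.symm
        have b3 : b * b * b = 1 := by
          apply cube_of_inv_cube
          rw [← f1]; exact e2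
        have ea : a = b⁻¹ * b⁻¹ := by
          have := congrArg (· * b⁻¹) f1
          simpa only [mul_inv_cancel_right] using this
        rw [inv_sq_of_cube b3] at ea
        exact h3 ⟨ea.symm, by rw [ea]; exact b3⟩
    have wF : wt (a⁻¹, a * b) = 1 := by
      refine wt_generic han hab1 ?_ ?_
      · rw [inv_inv]
        intro e
        exact hb (mul_eq_left.mp e)
      · rintro ⟨e1, e2⟩
        have a3 : a * a * a = 1 := cube_of_inv_cube e2
        have eb : b = a⁻¹ * a⁻¹ := by
          have := congrArg (a⁻¹ * ·) e1
          simpa only [inv_mul_cancel_left] using this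
        rw [inv_sq_of_cube a3] at eb
        exact h3 ⟨eb, a3⟩
    -- distinctness
    have nA : ((a : G), b) ∉ ({(b, (a * b)⁻¹), ((a * b)⁻¹, a),
        (b⁻¹, a⁻¹), (a * b, b⁻¹), (a⁻¹, a * b)} : Finset (G × G)) := by
      simp only [mem_insert, mem_singleton, Prod.mk.injEq, not_or]
      refine ⟨?_, ?_, ?_, ?_, ?_⟩ <;> rintro ⟨e1, e2⟩
      · have f1 : a * b = b⁻¹ := inv_eq_of_eq_inv e2
        rw [e1] at f1
        have b3 := cube_of_sq_eq_inv f1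
        exact h3 ⟨e1.symm, by rw [e1]; exact b3⟩
      · have f1 : a * b = a⁻¹ := inv_eq_of_eq_inv e1
        rw [e2] at f1
        exact h3 ⟨e2, cube_of_sq_eq_inv f1⟩
      · exact h2 e2
      · exact hb (mul_eq_left.mp e1.symm)
      · exact ha (mul_eq_right.mp e2.symm)
    have nB : ((b : G), (a * b)⁻¹) ∉ ({((a * b)⁻¹, a),
        (b⁻¹, a⁻¹), (a * b, b⁻¹), (a⁻¹, a * b)} : Finset (G × G)) := by
      simp only [mem_insert, mem_singleton, Prod.mk.injEq, not_or]
      refine ⟨?_, ?_, ?_, ?_⟩ <;> rintro ⟨e1, e2⟩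
      · have f1 : a * b = b⁻¹ := inv_eq_of_eq_inv e1
        have f2 : a * b = a⁻¹ := inv_eq_of_eq_inv e2.symm
        have eq1 : a = b := inv_injective (f2.symm.trans f1)
        rw [eq1] at f1
        have b3 := cube_of_sq_eq_inv f1
        exact h3 ⟨eq1.symm, by rw [eq1]; exact b3⟩
      · exact hb (mul_eq_left.mp (inv_injective e2))
      · exact ha (mul_eq_right.mp e1.symm)
      · exact h2 e1
    have nC : (((a * b)⁻¹ : G), a) ∉ ({(b⁻¹, a⁻¹), (a * b, b⁻¹),
        (a⁻¹, a * b)} : Finset (G × G)) := by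
      simp only [mem_insert, mem_singleton, Prod.mk.injEq, not_or]
      refine ⟨?_, ?_, ?_⟩ <;> rintro ⟨e1, e2⟩
      · exact ha (mul_eq_right.mp (inv_injective e1))
      · exact h2 (inv_eq_of_eq_inv e2)
      · exact hb (mul_eq_left.mp e2.symm)
    have nD : ((b⁻¹ : G), a⁻¹) ∉ ({(a * b, b⁻¹), (a⁻¹, a * b)} : Finset (G × G)) := by
      simp only [mem_insert, mem_singleton, Prod.mk.injEq, not_or]
      refine ⟨?_, ?_⟩ <;> rintro ⟨e1, e2⟩
      · have eq1 : a = b := inv_injective e2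
        have f1 : a * b = b⁻¹ := e1.symm
        rw [eq1] at f1
        have b3 := cube_of_sq_eq_inv f1
        exact h3 ⟨eq1.symm, by rw [eq1]; exact b3⟩
      · have eq1 : b = a := inv_injective e1
        have f1 : a * b = a⁻¹ := e2.symm
        rw [eq1] at f1
        exact h3 ⟨eq1, cube_of_sq_eq_inv f1⟩
    have nE : ((a * b : G), b⁻¹) ∉ ({(a⁻¹, a * b)} : Finset (G × G)) := by
      simp only [mem_singleton, Prod.mk.injEq, not_and]
      intro e1 e2
      have eq1 : b = a := inv_injective (e2.trans e1)
      rw [eq1] at e1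
      exact h3 ⟨eq1, cube_of_sq_eq_inv e1⟩
    rw [sum_insert nA, sum_insert nB, sum_insert nC, sum_insert nD, sum_insert nE,
      sum_singleton, wA, wB, wC, wD, wE, wF]
    norm_num


lemma filter_cls_eq (q : G × G) :
    univ.filter (fun p => cls p = cls q) = cls q := by
  ext p
  simp only [mem_filter, mem_univ, true_and]
  exact mem_cls_iff.symm

lemma six_mul_card : 6 * Nat.card (Quot (pairRel G)) = ∑ p : G × G, wt p := by
  rw [card_quot_eq]
  have h := sum_fiberwise_eq_sum_filter (univ : Finset (G × G))
    (univ.image (cls (G := G))) cls wt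
  have h2 : (univ.filter fun p : G × G => cls p ∈ univ.image (cls (G := G))) = univ :=
    filter_true_of_mem fun p _ => mem_image_of_mem _ (mem_univ p)
  rw [h2] at h
  have h3 : ∀ S ∈ univ.image (cls (G := G)),
      (∑ p ∈ univ.filter fun p => cls p = S, wt p) = 6 := by
    intro S hS
    obtain ⟨q, -, rfl⟩ := mem_image.mp hS
    rw [filter_cls_eq, sum_wt_cls]
  calc 6 * (univ.image (cls (G := G))).card
      = ∑ _S ∈ univ.image (cls (G := G)), 6 := by rw [sum_const, smul_eq_mul, mul_comm]
    _ = ∑ S ∈ univ.image (cls (G := G)),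
          ∑ p ∈ univ.filter fun p => cls p = S, wt p := (Finset.sum_congr rfl h3).symm
    _ = ∑ p : G × G, wt p := h

lemma row_one : ∑ b : G, wt ((1 : G), b) = 6 := by
  have h : ∀ b : G, wt ((1 : G), b) = if b = 1 then 6 else 0 := by
    intro b
    by_cases hb : b = 1 <;> simp [wt, hb]
  rw [Finset.sum_congr rfl fun b _ => h b, Finset.sum_ite_eq' univ (1 : G) fun _ => (6 : ℕ)]
  simp

lemma row_ne_one {a : G} (ha : a ≠ 1) :
    (∑ b : G, wt (a, b)) + 2 = Fintype.card G + 3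
      + (if a * a = 1 then 3 else 0) + (if a * a * a = 1 then 2 else 0) := by
  set s0 : Finset G := {1, a⁻¹, a} with hs0def
  have hsplit : (∑ b ∈ univ \ s0, wt (a, b)) + ∑ b ∈ s0, wt (a, b)
      = ∑ b : G, wt (a, b) := Finset.sum_sdiff (subset_univ s0)
  have hones : ∀ b ∈ univ \ s0, wt (a, b) = 1 := by
    intro b hbmem
    simp only [hs0def, mem_sdiff, mem_univ, true_and, mem_insert, mem_singleton,
      not_or] at hbmem
    obtain ⟨hb1, hbai, hba⟩ := hbmem
    exact wt_generic ha hb1 hbai fun hc => hba hc.1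
  have hsum1 : ∑ b ∈ univ \ s0, wt (a, b) = (univ \ s0).card := by
    rw [Finset.sum_congr rfl hones]
    simp
  have hcard : (univ \ s0).card + s0.card = Fintype.card G := by
    rw [Finset.card_sdiff_add_card_eq_card (subset_univ s0), card_univ]
  have w0 : wt (a, (1 : G)) = 0 := by simp [wt, ha]
  by_cases h2 : a * a = 1
  · have hai : a⁻¹ = a := inv_eq_iff_mul_eq_one.mpr h2
    have h3 : ¬(a * a * a = 1) := by
      intro e
      apply ha
      rwa [h2, one_mul] at e
    have hs0 : s0 = {1, a} := by rw [hs0def, hai, Finset.pair_eq_singleton]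
    have hn1a : (1 : G) ∉ ({a} : Finset G) := by
      simp only [mem_singleton]
      exact fun e => ha e.symm
    have hcard0 : s0.card = 2 := by
      rw [hs0, card_insert_of_notMem hn1a, card_singleton]
    have hsum0 : ∑ b ∈ s0, wt (a, b) = 6 := by
      rw [hs0, sum_insert hn1a, sum_singleton, w0]
      have w1 : wt (a, a) = 6 := by simp [wt, ha, hai]
      rw [w1]
    rw [if_pos h2, if_neg h3]
    omega
  · have hne : a⁻¹ ≠ a := fun e => h2 (inv_eq_iff_mul_eq_one.mp e)
    have hne' : a ≠ a⁻¹ := fun e => hne e.symm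
    have hn1 : (1 : G) ∉ ({a⁻¹, a} : Finset G) := by
      simp only [mem_insert, mem_singleton, not_or]
      exact ⟨fun e => inv_ne_one.2 ha e.symm, fun e => ha e.symm⟩
    have hn2 : a⁻¹ ∉ ({a} : Finset G) := by
      simp only [mem_singleton]
      exact hne
    have hcard0 : s0.card = 3 := by
      rw [hs0def, card_insert_of_notMem hn1, card_insert_of_notMem hn2, card_singleton]
    have w1 : wt (a, a⁻¹) = 3 := by simp [wt, ha, hne']
    by_cases h3 : a * a * a = 1
    · have hsum0 : ∑ b ∈ s0, wt (a, b) = 6 := by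
        rw [hs0def, sum_insert hn1, sum_insert hn2, sum_singleton, w0, w1]
        have w2 : wt (a, a) = 3 := by simp [wt, ha, hne', h3]
        rw [w2]
        norm_num
      rw [if_neg h2, if_pos h3]
      omega
    · have hsum0 : ∑ b ∈ s0, wt (a, b) = 4 := by
        rw [hs0def, sum_insert hn1, sum_insert hn2, sum_singleton, w0, w1]
        have w2 : wt (a, a) = 1 := by simp [wt, ha, hne', h3]
        rw [w2]
        norm_num
      rw [if_neg h2, if_neg h3]
      omega

lemma sum_wt_total : (∑ p : G × G, wt p) =
    Fintype.card G ^ 2 + 2 * (univ.filter fun g : G => g * g * g = 1 ∧ g ≠ 1).card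
      + 3 * (univ.filter fun g : G => g * g = 1 ∧ g ≠ 1).card + 5 := by
  rw [Fintype.sum_prod_type]
  set t := (univ.filter fun g : G => g * g * g = 1 ∧ g ≠ 1).card with ht
  set s := (univ.filter fun g : G => g * g = 1 ∧ g ≠ 1).card with hs
  set E := (univ : Finset G).erase 1 with hE
  set m := E.card with hm
  have hn : Fintype.card G = m + 1 := by
    rw [hm, hE, Finset.card_erase_add_one (mem_univ (1 : G)), card_univ]
  have hsplit : (∑ b : G, wt ((1 : G), b)) + ∑ a ∈ E, ∑ b : G, wt (a, b)
      = ∑ a : G, ∑ b : G, wt (a, b) :=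
    Finset.add_sum_erase (univ : Finset G) (fun a => ∑ b : G, wt (a, b)) (mem_univ 1)
  have hrow : ∀ a ∈ E, (∑ b : G, wt (a, b)) + 2 = Fintype.card G + 3
      + (if a * a = 1 then 3 else 0) + (if a * a * a = 1 then 2 else 0) := by
    intro a haE
    exact row_ne_one (Finset.ne_of_mem_erase haE)
  have hsum2 : ∑ a ∈ E, ((∑ b : G, wt (a, b)) + 2)
      = (∑ a ∈ E, ∑ b : G, wt (a, b)) + 2 * m := by
    rw [Finset.sum_add_distrib, sum_const, smul_eq_mul, hm, mul_comm]
  have hsum3 : ∑ a ∈ E, ((∑ b : G, wt (a, b)) + 2)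
      = m * (Fintype.card G + 3) + 3 * s + 2 * t := by
    rw [Finset.sum_congr rfl hrow]
    rw [Finset.sum_add_distrib, Finset.sum_add_distrib, sum_const, smul_eq_mul, ← hm]
    congr 1
    · congr 1
      rw [← Finset.sum_filter]
      have : E.filter (fun a => a * a = 1) = univ.filter fun g : G => g * g = 1 ∧ g ≠ 1 := by
        ext x
        simp only [hE, mem_filter, mem_erase, mem_univ, true_and, and_true]
        tauto
      rw [this, sum_const, smul_eq_mul, hs, mul_comm]
    · rw [← Finset.sum_filter]
      have : E.filter (fun a => a * a * a = 1) = univ.filter fun g : G => g * g * g = 1 ∧ g ≠ 1 := by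
        ext x
        simp only [hE, mem_filter, mem_erase, mem_univ, true_and, and_true]
        tauto
      rw [this, sum_const, smul_eq_mul, ht, mul_comm]
  have key : (∑ a : G, ∑ b : G, wt (a, b)) + 2 * m
      = 6 + m * (Fintype.card G + 3) + 3 * s + 2 * t := by
    rw [← hsplit, row_one]
    omega
  rw [hn] at key ⊢
  have expand : (m + 1) ^ 2 + 2 * t + 3 * s + 5 + 2 * m
      = 6 + m * (m + 1 + 3) + 3 * s + 2 * t := by ring
  exact Nat.add_right_cancel (key.trans expand.symm)

end

/-- For a finite group `G` of order `n`, the number of `∼`-classes equals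
`(n² + 2|G₍₃₎| + 3|G₍₂₎| + 5)/6` (the division being exact). -/
theorem card_pairRel_classes [Fintype G] :
    6 * Nat.card (Quot (pairRel G)) =
      Fintype.card G ^ 2 + 2 * Nat.card {g : G // orderOf g = 3} +
        3 * Nat.card {g : G // orderOf g = 2} + 5 := by
  classical
  have h2 : Nat.card {g : G // orderOf g = 2}
      = (univ.filter fun g : G => g * g = 1 ∧ g ≠ 1).card := by
    rw [Nat.card_eq_fintype_card, Fintype.card_subtype]
    congr 1
    apply Finset.filter_congr
    intro g _
    constructor
    · intro h
      refine ⟨?_, ?_⟩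
      · have hp := pow_orderOf_eq_one g
        rwa [h, pow_two] at hp
      · intro e
        rw [e, orderOf_one] at h
        exact absurd h (by norm_num)
    · rintro ⟨e, hne⟩
      haveI : Fact (Nat.Prime 2) := ⟨Nat.prime_two⟩
      exact orderOf_eq_prime (by rwa [pow_two]) hne
  have h3 : Nat.card {g : G // orderOf g = 3}
      = (univ.filter fun g : G => g * g * g = 1 ∧ g ≠ 1).card := by
    rw [Nat.card_eq_fintype_card, Fintype.card_subtype]
    congr 1
    apply Finset.filter_congr
    intro g _
    constructor
    · intro h
      refine ⟨?_, ?_⟩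
      · have hp := pow_orderOf_eq_one g
        rwa [h, pow_three, ← mul_assoc] at hp
      · intro e
        rw [e, orderOf_one] at h
        exact absurd h (by norm_num)
    · rintro ⟨e, hne⟩
      haveI : Fact (Nat.Prime 3) := ⟨Nat.prime_three⟩
      exact orderOf_eq_prime (by rw [pow_three, ← mul_assoc]; exact e) hne
  rw [six_mul_card, sum_wt_total, h2, h3]
end
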